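/- Let θ ∈ ℝ, σ > 0 and t > 0. For each ν > 0, let μ_ν be the law of X_ν = θG_ν + σ√(G_ν) · Z, where Z is a standard Gaussian random variable and G_ν is a Gamma(t/ν, 1/ν) distributed random variable independent of Z. Then as ν ↓ 0 (along any sequence νₙ → 0⁺), μ_ν converges weakly to the Gaussian distribution N(θt, σ²t). -/

import Mathlib

open MeasureTheory ProbabilityTheory Filter Topology

section AuxLemmas
open Set Real

lemma gamma_moment {α β : ℝ} (hα : 0 < α) (hβ : 0 < β) (k : ℕ) :
    ∫ x in Ioi (0:ℝ), gammaPDFReal α β x * x ^ k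
      = Real.Gamma (α + k) / (Real.Gamma α * β ^ (k:ℝ)) := by
  have hk : (0:ℝ) < α + k := by positivity
  have h1 : ∫ x in Ioi (0:ℝ), gammaPDFReal α β x * x ^ k
      = ∫ x in Ioi (0:ℝ), (β ^ α / Real.Gamma α) * (x ^ (α + k - 1) * Real.exp (-(β * x))) := by
    refine setIntegral_congr_fun measurableSet_Ioi (fun x hx => ?_)
    have hx0 : (0:ℝ) < x := hx
    rw [gammaPDFReal, if_pos hx0.le]
    rw [show x ^ (α + (k:ℝ) - 1) = x ^ (α-1) * x ^ (k:ℝ) by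
      rw [← Real.rpow_add hx0]; ring_nf, Real.rpow_natCast]
    ring
  rw [h1, integral_const_mul, integral_rpow_mul_exp_neg_mul_Ioi hk hβ]
  have hΓ : Real.Gamma α ≠ 0 := (Real.Gamma_pos_of_pos hα).ne'
  have hb1 : (1/β) ^ (α + (k:ℝ)) = (β ^ (α + (k:ℝ)))⁻¹ := by
    rw [one_div, Real.inv_rpow hβ.le]
  rw [hb1, Real.rpow_add hβ]
  have hbk : (0:ℝ) < β ^ (k:ℝ) := Real.rpow_pos_of_pos hβ _
  have hba : (0:ℝ) < β ^ α := Real.rpow_pos_of_pos hβ _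
  field_simp

lemma gamma_integrableOn_moment {α β : ℝ} (hα : 0 < α) (hβ : 0 < β) (k : ℕ) :
    IntegrableOn (fun x => gammaPDFReal α β x * x ^ k) (Ioi (0:ℝ)) := by
  have hk : (-1:ℝ) < α + k - 1 := by push_cast; nlinarith [Nat.cast_nonneg (α := ℝ) k]
  have base : IntegrableOn (fun x : ℝ => x ^ (α + (k:ℝ) - 1) * Real.exp (-β * x ^ (1:ℝ)))
      (Ioi (0:ℝ)) := integrableOn_rpow_mul_exp_neg_mul_rpow hk zero_lt_one hβ
  have base2 : IntegrableOn
      (fun x : ℝ => (β ^ α / Real.Gamma α) * (x ^ (α + (k:ℝ) - 1) * Real.exp (-(β * x))))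
      (Ioi (0:ℝ)) := by
    refine (Integrable.const_mul ?_ _)
    refine base.congr_fun (fun x hx => ?_) measurableSet_Ioi
    beta_reduce; rw [Real.rpow_one]; ring_nf
  refine base2.congr_fun (fun x hx => ?_) measurableSet_Ioi
  have hx0 : (0:ℝ) < x := hx
  beta_reduce
  rw [gammaPDFReal, if_pos hx0.le,
    show x ^ (α + (k:ℝ) - 1) = x ^ (α-1) * x ^ (k:ℝ) by
      rw [← Real.rpow_add hx0]; ring_nf, Real.rpow_natCast]
  ring

lemma gamma_central_sq {α β : ℝ} (hα : 0 < α) (hβ : 0 < β) :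
    ∫ x in Ioi (0:ℝ), gammaPDFReal α β x * (x - α/β) ^ 2 = α / β ^ 2 := by
  set m := α / β with hm
  have h0 := gamma_moment hα hβ 0
  have h1 := gamma_moment hα hβ 1
  have h2 := gamma_moment hα hβ 2
  have hΓ : (0:ℝ) < Real.Gamma α := Real.Gamma_pos_of_pos hα
  have hG1 : Real.Gamma (α + 1) = α * Real.Gamma α := Real.Gamma_add_one hα.ne'
  have hG2 : Real.Gamma (α + 2) = (α + 1) * (α * Real.Gamma α) := by
    rw [show α + 2 = (α + 1) + 1 by ring, Real.Gamma_add_one (by positivity), hG1]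
  have e0 : ∫ x in Ioi (0:ℝ), gammaPDFReal α β x * x ^ 0 = 1 := by
    rw [h0]; push_cast; simp [hΓ.ne']
  have e1 : ∫ x in Ioi (0:ℝ), gammaPDFReal α β x * x ^ 1 = α / β := by
    rw [h1]; push_cast; rw [hG1, Real.rpow_one]; field_simp
  have e2 : ∫ x in Ioi (0:ℝ), gammaPDFReal α β x * x ^ 2 = α * (α+1) / β ^ 2 := by
    rw [h2]; push_cast; rw [hG2, show ((2:ℝ)) = ((2:ℕ):ℝ) by norm_num, Real.rpow_natCast]
    field_simp
  have i0 := gamma_integrableOn_moment hα hβ 0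
  have i1 := gamma_integrableOn_moment hα hβ 1
  have i2 := gamma_integrableOn_moment hα hβ 2
  have split : ∀ x : ℝ, gammaPDFReal α β x * (x - m) ^ 2
      = gammaPDFReal α β x * x ^ 2 - (2*m) * (gammaPDFReal α β x * x ^ 1)
        + m^2 * (gammaPDFReal α β x * x ^ 0) := by
    intro x; ring
  rw [show (fun x => gammaPDFReal α β x * (x - m) ^ 2) = fun x =>
      gammaPDFReal α β x * x ^ 2 - (2*m) * (gammaPDFReal α β x * x ^ 1)
        + m^2 * (gammaPDFReal α β x * x ^ 0) from funext split]
  rw [integral_add (by exact (i2.sub (i1.const_mul _))) (i0.const_mul _),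
    integral_sub i2 (i1.const_mul _), integral_const_mul, integral_const_mul, e0, e1, e2, hm]
  field_simp; ring

lemma gamma_integrable_central_sq {α β : ℝ} (hα : 0 < α) (hβ : 0 < β) :
    Integrable (fun x => gammaPDFReal α β x * (x - α/β) ^ 2) := by
  have i0 := gamma_integrableOn_moment hα hβ 0
  have i1 := gamma_integrableOn_moment hα hβ 1
  have i2 := gamma_integrableOn_moment hα hβ 2
  set m := α / β
  have hIoi : IntegrableOn (fun x => gammaPDFReal α β x * (x - m) ^ 2) (Ioi (0:ℝ)) := by
    have : (fun x => gammaPDFReal α β x * (x - m) ^ 2) = fun x =>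
        gammaPDFReal α β x * x ^ 2 - (2*m) * (gammaPDFReal α β x * x ^ 1)
          + m^2 * (gammaPDFReal α β x * x ^ 0) := funext fun x => by ring
    rw [this]
    exact (i2.sub (i1.const_mul _)).add (i0.const_mul _)
  have hind : (fun x => gammaPDFReal α β x * (x - m) ^ 2)
      = Set.indicator (Ici (0:ℝ)) (fun x => gammaPDFReal α β x * (x - m) ^ 2) := by
    funext x
    by_cases hx : (0:ℝ) ≤ x
    · exact (Set.indicator_of_mem hx (fun x => gammaPDFReal α β x * (x - m) ^ 2)).symm
    · simp only [gammaPDFReal, if_neg hx, zero_mul]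
      exact (Set.indicator_of_notMem hx (fun x => gammaPDFReal α β x * (x - m) ^ 2)).symm
  rw [hind, integrable_indicator_iff measurableSet_Ici]
  exact Iff.mpr integrableOn_Ici_iff_integrableOn_Ioi hIoi

lemma gamma_chebyshev {α β : ℝ} (hα : 0 < α) (hβ : 0 < β) {ε : ℝ} (hε : 0 < ε) :
    gammaMeasure α β {x | ε ≤ |x - α/β|} ≤ ENNReal.ofReal (α / β ^ 2 / ε ^ 2) := by
  set m := α / β
  have hnn : ∀ x, 0 ≤ gammaPDFReal α β x * (x - m) ^ 2 :=
    fun x => mul_nonneg (gammaPDFReal_nonneg hα hβ x) (sq_nonneg _)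
  have hlin : ∫⁻ x, ENNReal.ofReal ((x - m) ^ 2) ∂(gammaMeasure α β)
      = ENNReal.ofReal (α / β ^ 2) := by
    have hpdfm : Measurable (gammaPDF α β) := (measurable_gammaPDFReal α β).ennreal_ofReal
    have hsqm : Measurable (fun x : ℝ => ENNReal.ofReal ((x - m) ^ 2)) := by fun_prop
    rw [gammaMeasure, lintegral_withDensity_eq_lintegral_mul _ hpdfm hsqm]
    have : ∀ x, (gammaPDF α β * fun x => ENNReal.ofReal ((x - m) ^ 2)) x
        = ENNReal.ofReal (gammaPDFReal α β x * (x - m) ^ 2) := by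
      intro x
      simp only [Pi.mul_apply, gammaPDF]
      rw [← ENNReal.ofReal_mul (gammaPDFReal_nonneg hα hβ x)]
    simp_rw [this]
    rw [← ofReal_integral_eq_lintegral_ofReal (gamma_integrable_central_sq hα hβ)
      (ae_of_all _ hnn)]
    congr 1
    have hind : (fun x => gammaPDFReal α β x * (x - m) ^ 2)
        = Set.indicator (Ici (0:ℝ)) (fun x => gammaPDFReal α β x * (x - m) ^ 2) := by
      funext x
      by_cases hx : (0:ℝ) ≤ x
      · exact (Set.indicator_of_mem hx (fun x => gammaPDFReal α β x * (x - m) ^ 2)).symm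
      · simp only [gammaPDFReal, if_neg hx, zero_mul]
        exact (Set.indicator_of_notMem hx (fun x => gammaPDFReal α β x * (x - m) ^ 2)).symm
    conv_lhs => rw [hind]
    rw [integral_indicator measurableSet_Ici, integral_Ici_eq_integral_Ioi]
    exact gamma_central_sq hα hβ
  calc gammaMeasure α β {x | ε ≤ |x - m|}
      ≤ gammaMeasure α β {x | ENNReal.ofReal (ε^2) ≤ ENNReal.ofReal ((x - m) ^ 2)} := by
        refine measure_mono (fun x hx => ?_)
        have : ε ^ 2 ≤ (x - m) ^ 2 := by
          rw [← sq_abs (x - m)]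
          exact pow_le_pow_left₀ hε.le hx 2
        exact ENNReal.ofReal_le_ofReal this
    _ ≤ (∫⁻ x, ENNReal.ofReal ((x - m) ^ 2) ∂(gammaMeasure α β)) / ENNReal.ofReal (ε^2) :=
        meas_ge_le_lintegral_div
          (Measurable.aemeasurable (by fun_prop : Measurable (fun x : ℝ => ENNReal.ofReal ((x - m) ^ 2))))
          (by positivity) ENNReal.ofReal_ne_top
    _ = ENNReal.ofReal (α / β ^ 2 / ε ^ 2) := by
        rw [hlin, ← ENNReal.ofReal_div_of_pos (by positivity)]

end AuxLemmas

/-- Let `μ_ν` be the law of `X_ν = θ G_ν + σ √(G_ν) ⬝ Z` where `Z` is a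
standard Gaussian and `G_ν ~ Gamma(t/ν, 1/ν)` is independent of `Z`. Then along any
sequence `νₙ → 0⁺`, the laws `μ_{νₙ}` converge weakly to `N(θt, σ²t)`: integrals of every
bounded continuous function converge. -/
theorem varianceGamma_tendsto_gaussian_weakly
    {Ω : Type*} [MeasurableSpace Ω] (P : Measure Ω) [IsProbabilityMeasure P]
    (θ σ t : ℝ) (hσ : 0 < σ) (ht : 0 < t)
    (G : ℝ → Ω → ℝ) (Z : Ω → ℝ) (hGm : ∀ ν, Measurable (G ν)) (hZm : Measurable Z)
    (hG : ∀ ν : ℝ, 0 < ν → Measure.map (G ν) P = gammaMeasure (t / ν) (1 / ν))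
    (hZ : Measure.map Z P = gaussianReal 0 1)
    (hindep : ∀ ν : ℝ, 0 < ν → IndepFun (G ν) Z P)
    (νseq : ℕ → ℝ) (hpos : ∀ n, 0 < νseq n) (hlim : Tendsto νseq atTop (𝓝 0)) :
    ∀ f : BoundedContinuousFunction ℝ ℝ,
      Tendsto
        (fun n => ∫ x, f x ∂(Measure.map
          (fun ω => θ * G (νseq n) ω + σ * Real.sqrt (G (νseq n) ω) * Z ω) P))
        atTop
        (𝓝 (∫ x, f x ∂(gaussianReal (θ * t) (Real.toNNReal (σ ^ 2 * t))))) := by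
  intro f
  set X : ℕ → Ω → ℝ :=
    fun n ω => θ * G (νseq n) ω + σ * Real.sqrt (G (νseq n) ω) * Z ω with hXdef
  have hXm : ∀ n, Measurable (X n) := by
    intro n
    exact ((measurable_const.mul (hGm _)).add
      ((measurable_const.mul ((hGm _).sqrt)).mul hZm))
  set L : Ω → ℝ := fun ω => θ * t + σ * Real.sqrt t * Z ω with hLdef
  have hLm : Measurable L := measurable_const.add (measurable_const.mul hZm)
  -- identify the limit law
  have hmapL : Measure.map L P = gaussianReal (θ * t) (Real.toNNReal (σ ^ 2 * t)) := by
    have h1 : Measure.map L P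
        = Measure.map (fun x : ℝ => θ * t + σ * Real.sqrt t * x) (Measure.map Z P) :=
      (Measure.map_map (g := fun x : ℝ => θ * t + σ * Real.sqrt t * x)
        (by fun_prop) hZm).symm
    have h2 : (fun x : ℝ => θ * t + σ * Real.sqrt t * x)
        = (fun x : ℝ => x + θ * t) ∘ (fun x : ℝ => (σ * Real.sqrt t) * x) := by
      funext x; simp [Function.comp]; ring
    rw [h1, hZ, h2, ← Measure.map_map (measurable_add_const (θ * t))
      (measurable_const_mul (σ * Real.sqrt t))]
    have h3 : Measure.map (fun x : ℝ => (σ * Real.sqrt t) * x) (gaussianReal 0 1)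
        = gaussianReal ((σ * Real.sqrt t) * 0) (⟨(σ * Real.sqrt t)^2, sq_nonneg _⟩ * 1) :=
      gaussianReal_map_const_mul _
    rw [h3]
    have h4 : Measure.map (fun x : ℝ => x + θ * t)
        (gaussianReal ((σ * Real.sqrt t) * 0) (⟨(σ * Real.sqrt t)^2, sq_nonneg _⟩ * 1))
        = gaussianReal ((σ * Real.sqrt t) * 0 + θ * t)
          (⟨(σ * Real.sqrt t)^2, sq_nonneg _⟩ * 1) := gaussianReal_map_add_const _
    rw [h4]
    congr 1
    · ring
    · ext
      simp only [NNReal.coe_mul, NNReal.coe_mk, NNReal.coe_one, mul_one, Real.coe_toNNReal']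
      rw [max_eq_left (by positivity)]
      show (σ * Real.sqrt t) ^ 2 * 1 = σ ^ 2 * t
      rw [mul_one, mul_pow, Real.sq_sqrt ht.le]
  -- convergence in measure of G to the constant t
  have htim : TendstoInMeasure P (fun n => G (νseq n)) atTop (fun _ => t) := by
    rw [tendstoInMeasure_iff_dist]
    intro ε hε
    have hBs : MeasurableSet {x : ℝ | ε ≤ |x - t|} :=
      measurableSet_le measurable_const (measurable_id.sub_const t).abs
    have hb : ∀ n, P {ω | ε ≤ dist (G (νseq n) ω) t}
        ≤ ENNReal.ofReal (t * νseq n / ε ^ 2) := by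
      intro n
      have hα : 0 < t / νseq n := div_pos ht (hpos n)
      have hβ : 0 < 1 / νseq n := one_div_pos.mpr (hpos n)
      have hset : {ω | ε ≤ dist (G (νseq n) ω) t}
          = (G (νseq n)) ⁻¹' {x | ε ≤ |x - t|} := by
        ext ω; simp [Real.dist_eq]
      rw [hset, ← Measure.map_apply (hGm _) hBs, hG _ (hpos n)]
      have hch := gamma_chebyshev hα hβ hε
      have hν : νseq n ≠ 0 := (hpos n).ne'
      have hε' : ε ≠ 0 := hε.ne'
      have hab : t / νseq n / (1 / νseq n) = t := by
        field_simp
      have hvv : t / νseq n / (1 / νseq n) ^ 2 / ε ^ 2 = t * νseq n / ε ^ 2 := by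
        field_simp
      rw [hab, hvv] at hch
      exact hch
    have hupper : Tendsto (fun n => ENNReal.ofReal (t * νseq n / ε ^ 2)) atTop (𝓝 0) := by
      have hr : Tendsto (fun n => t * νseq n / ε ^ 2) atTop (𝓝 0) := by
        simpa using (hlim.const_mul t).div_const (ε ^ 2)
      simpa using ENNReal.tendsto_ofReal hr
    exact tendsto_of_tendsto_of_tendsto_of_le_of_le tendsto_const_nhds hupper
      (fun n => zero_le) hb
  -- integral identities
  have hint_eq : ∀ n, ∫ x, f x ∂(Measure.map (X n) P) = ∫ ω, f (X n ω) ∂P := fun n =>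
    integral_map (hXm n).aemeasurable f.continuous.aestronglyMeasurable
  have hlim_eq : ∫ x, f x ∂(gaussianReal (θ * t) (Real.toNNReal (σ ^ 2 * t)))
      = ∫ ω, f (L ω) ∂P := by
    rw [← hmapL, integral_map hLm.aemeasurable f.continuous.aestronglyMeasurable]
  -- subsequence argument
  apply Filter.tendsto_of_subseq_tendsto
  intro ns hns
  have htim' : TendstoInMeasure P (fun k => G (νseq (ns k))) atTop (fun _ => t) :=
    fun ε hε => (htim ε hε).comp hns
  obtain ⟨ms, _, hae⟩ := htim'.exists_seq_tendsto_ae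
  refine ⟨ms, ?_⟩
  show Tendsto (fun k => ∫ x, f x ∂(Measure.map (X (ns (ms k))) P)) atTop _
  simp only [hint_eq, hlim_eq]
  refine tendsto_integral_of_dominated_convergence (fun _ => ‖f‖)
    (fun k => (f.continuous.measurable.comp (hXm (ns (ms k)))).aestronglyMeasurable)
    (integrable_const _)
    (fun k => ae_of_all _ (fun ω => f.norm_coe_le_norm _)) ?_
  refine hae.mono (fun ω hω => ?_)
  have hsq : Tendsto (fun k => Real.sqrt (G (νseq (ns (ms k))) ω)) atTop
      (𝓝 (Real.sqrt t)) := (Real.continuous_sqrt.tendsto t).comp hω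
  have h1 : Tendsto (fun k => X (ns (ms k)) ω) atTop (𝓝 (L ω)) := by
    simpa using (hω.const_mul θ).add ((hsq.const_mul σ).mul_const (Z ω))
  exact (f.continuous.tendsto _).comp h1
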